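/- The quadratic coefficient V^{(2)}_t of the value process V^H_t(x) = V^{(0)}_t − 2V^{(1)}_t x + V^{(2)}_t x^2 equals the value V^0_t(1) = essinf_{ϑ∈Θ} E[(1 + ∫_t^T ϑ_r dS_r)^2 | F_t] of the pure-investment problem and in particular does not depend on H. -/

import Mathlib

open MeasureTheory Filter

lemma aux_sq_bounds (ε δ a b : ℝ) (hε : 0 < ε) (hδ : ε * δ = 1) :
    (1 - ε) * a ^ 2 - (1 + δ) * b ^ 2 ≤ (a + b) ^ 2 ∧
      (a + b) ^ 2 ≤ (1 + ε) * a ^ 2 + (1 + δ) * b ^ 2 := by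
  have hδ0 : 0 < δ := by nlinarith
  constructor
  · nlinarith [sq_nonneg (ε * a + b), sq_nonneg b, sq_nonneg a, mul_pos hε hδ0]
  · nlinarith [sq_nonneg (ε * a - b), sq_nonneg b, sq_nonneg a, mul_pos hε hδ0]

lemma aux_le_zero {a C : ℝ} (h : ∀ n : ℕ, 1 ≤ n → a ≤ C / n) : a ≤ 0 :=
  ge_of_tendsto (tendsto_const_div_atTop_nhds_zero_nat C)
    (Filter.eventually_atTop.2 ⟨1, fun n hn => h n hn⟩)

lemma aux_condexp_comb {Ω : Type*} {m : MeasurableSpace Ω} {μ : Measure Ω}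
    (𝒢 : MeasurableSpace Ω) (a b : ℝ) (F H : Ω → ℝ) (hF : MemLp F 2 μ) (hH : MemLp H 2 μ) :
    μ[fun ω => a * F ω ^ 2 + b * H ω ^ 2|𝒢] =ᵐ[μ]
      fun ω => a * (μ[fun ω => F ω ^ 2|𝒢]) ω + b * (μ[fun ω => H ω ^ 2|𝒢]) ω := by
  have h1 : Integrable (fun ω => F ω ^ 2) μ := hF.integrable_sq
  have h2 : Integrable (fun ω => H ω ^ 2) μ := hH.integrable_sq
  have hadd : μ[fun ω => a * F ω ^ 2 + b * H ω ^ 2|𝒢] =ᵐ[μ]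
      μ[fun ω => a * F ω ^ 2|𝒢] + μ[fun ω => b * H ω ^ 2|𝒢] :=
    condExp_add (h1.const_mul a) (h2.const_mul b) 𝒢
  have hs1 : μ[fun ω => a * F ω ^ 2|𝒢] =ᵐ[μ] fun ω => a * (μ[fun ω => F ω ^ 2|𝒢]) ω :=
    condExp_smul (μ := μ) (m := 𝒢) a (fun ω => F ω ^ 2)
  have hs2 : μ[fun ω => b * H ω ^ 2|𝒢] =ᵐ[μ] fun ω => b * (μ[fun ω => H ω ^ 2|𝒢]) ω :=
    condExp_smul (μ := μ) (m := 𝒢) b (fun ω => H ω ^ 2)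
  exact hadd.trans (hs1.add hs2)

theorem quadratic_coefficient_eq_pure_investment_value
    {Ω : Type*} {m : MeasurableSpace Ω} (μ : Measure Ω) [IsProbabilityMeasure μ]
    (𝒢 : MeasurableSpace Ω) (h𝒢 : 𝒢 ≤ m)
    (H : Ω → ℝ) (hH : MemLp H 2 μ)
    (Θ : Type*) [AddCommGroup Θ] [Module ℝ Θ]
    (G : Θ → Ω → ℝ)
    (hG2 : ∀ ϑ, MemLp (G ϑ) 2 μ)
    (hGadd : ∀ ϑ₁ ϑ₂ : Θ, G (ϑ₁ + ϑ₂) = fun ω => G ϑ₁ ω + G ϑ₂ ω)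
    (hGsmul : ∀ (c : ℝ) (ϑ : Θ), G (c • ϑ) = fun ω => c * G ϑ ω)
    (hinj : ∀ ϑ : Θ, (G ϑ =ᵐ[μ] 0) → ϑ = 0)
    (V : ℝ → Ω → ℝ) (ϑstar : ℝ → Θ)
    (hVle : ∀ x : ℝ, ∀ ϑ : Θ,
      V x ≤ᵐ[μ] μ[fun ω => (H ω - x - G ϑ ω) ^ 2 | 𝒢])
    (hopt : ∀ x : ℝ,
      V x =ᵐ[μ] μ[fun ω => (H ω - x - G (ϑstar x) ω) ^ 2 | 𝒢])
    (Vpure : Ω → ℝ) (ϑpure : Θ)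
    (hVpureLe : ∀ ϑ : Θ,
      Vpure ≤ᵐ[μ] μ[fun ω => (1 + G ϑ ω) ^ 2 | 𝒢])
    (hVpureOpt : Vpure =ᵐ[μ] μ[fun ω => (1 + G ϑpure ω) ^ 2 | 𝒢])
    (V0 V1 V2 : Ω → ℝ)
    (hquad : ∀ x : ℝ, V x =ᵐ[μ] fun ω => V0 ω - 2 * V1 ω * x + V2 ω * x ^ 2) :
    V2 =ᵐ[μ] Vpure := by
  -- nonnegativity of Vpure
  have hVp0 : ∀ᵐ ω ∂μ, 0 ≤ Vpure ω := by
    filter_upwards [hVpureOpt,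
      condExp_nonneg (μ := μ) (m := 𝒢) (f := fun ω => (1 + G ϑpure ω) ^ 2)
        (Eventually.of_forall fun ω => sq_nonneg _)] with ω h1 h2
    rw [h1]; exact h2
  -- key two-sided estimate
  have key : ∀ n mm : ℕ, 1 ≤ n → 1 ≤ mm → ∀ᵐ ω ∂μ,
      ((1 - 1 / (mm : ℝ)) * (n : ℝ) ^ 2) * Vpure ω - (1 + (mm : ℝ)) * (μ[fun ω => H ω ^ 2|𝒢]) ω
          ≤ V0 ω - 2 * V1 ω * (n : ℝ) + V2 ω * (n : ℝ) ^ 2 ∧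
        V0 ω - 2 * V1 ω * (n : ℝ) + V2 ω * (n : ℝ) ^ 2
          ≤ ((1 + 1 / (mm : ℝ)) * (n : ℝ) ^ 2) * Vpure ω
              + (1 + (mm : ℝ)) * (μ[fun ω => H ω ^ 2|𝒢]) ω := by
    intro n mm hn hm
    have hn0 : (0 : ℝ) < n := by exact_mod_cast hn
    have hm0 : (0 : ℝ) < mm := by exact_mod_cast hm
    have hε : 0 < 1 / (mm : ℝ) := one_div_pos.mpr hm0
    have hδ : 1 / (mm : ℝ) * mm = 1 := one_div_mul_cancel hm0.ne'
    have hε1 : 1 / (mm : ℝ) ≤ 1 := by rw [div_le_one hm0]; exact_mod_cast hm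
    -- ### upper bound
    have hfu : Integrable (fun ω => (H ω - (n : ℝ) - G ((n : ℝ) • ϑpure) ω) ^ 2) μ :=
      ((hH.sub (memLp_const _)).sub (hG2 _)).integrable_sq
    have hFu : MemLp (fun ω => 1 + G ϑpure ω) 2 μ := (memLp_const (μ := μ) (p := 2) (1 : ℝ)).add (hG2 ϑpure)
    have hgu : Integrable (fun ω =>
        ((1 + 1 / (mm : ℝ)) * (n : ℝ) ^ 2) * (1 + G ϑpure ω) ^ 2
          + (1 + (mm : ℝ)) * H ω ^ 2) μ :=
      (hFu.integrable_sq.const_mul _).add (hH.integrable_sq.const_mul _)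
    have hptU : ∀ ω, (H ω - (n : ℝ) - G ((n : ℝ) • ϑpure) ω) ^ 2
        ≤ ((1 + 1 / (mm : ℝ)) * (n : ℝ) ^ 2) * (1 + G ϑpure ω) ^ 2
          + (1 + (mm : ℝ)) * H ω ^ 2 := by
      intro ω
      simp only [hGsmul]
      obtain ⟨-, h2⟩ :=
        aux_sq_bounds (1 / (mm : ℝ)) mm (-((n : ℝ) * (1 + G ϑpure ω))) (H ω) hε hδ
      have e1 : (-((n : ℝ) * (1 + G ϑpure ω)) + H ω) ^ 2
          = (H ω - (n : ℝ) - (n : ℝ) * G ϑpure ω) ^ 2 := by ring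
      have e2 : (1 + 1 / (mm : ℝ)) * (-((n : ℝ) * (1 + G ϑpure ω))) ^ 2
          = ((1 + 1 / (mm : ℝ)) * (n : ℝ) ^ 2) * (1 + G ϑpure ω) ^ 2 := by ring
      rw [e1, e2] at h2
      exact h2
    have hmonoU : μ[fun ω => (H ω - (n : ℝ) - G ((n : ℝ) • ϑpure) ω) ^ 2|𝒢] ≤ᵐ[μ]
        μ[fun ω => ((1 + 1 / (mm : ℝ)) * (n : ℝ) ^ 2) * (1 + G ϑpure ω) ^ 2
          + (1 + (mm : ℝ)) * H ω ^ 2|𝒢] :=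
      condExp_mono hfu hgu (Eventually.of_forall hptU)
    have hcombU : μ[fun ω => ((1 + 1 / (mm : ℝ)) * (n : ℝ) ^ 2) * (1 + G ϑpure ω) ^ 2
          + (1 + (mm : ℝ)) * H ω ^ 2|𝒢] =ᵐ[μ]
        fun ω => ((1 + 1 / (mm : ℝ)) * (n : ℝ) ^ 2) * (μ[fun ω => (1 + G ϑpure ω) ^ 2|𝒢]) ω
          + (1 + (mm : ℝ)) * (μ[fun ω => H ω ^ 2|𝒢]) ω :=
      aux_condexp_comb 𝒢 _ _ _ _ hFu hH
    -- ### lower bound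
    have hfl : Integrable (fun ω => (H ω - (n : ℝ) - G (ϑstar (n : ℝ)) ω) ^ 2) μ :=
      ((hH.sub (memLp_const _)).sub (hG2 _)).integrable_sq
    have hFl : MemLp (fun ω => 1 + G ((n : ℝ)⁻¹ • ϑstar (n : ℝ)) ω) 2 μ :=
      (memLp_const (μ := μ) (p := 2) (1 : ℝ)).add (hG2 _)
    have hgl : Integrable (fun ω =>
        ((1 - 1 / (mm : ℝ)) * (n : ℝ) ^ 2) * (1 + G ((n : ℝ)⁻¹ • ϑstar (n : ℝ)) ω) ^ 2
          + (-(1 + (mm : ℝ))) * H ω ^ 2) μ :=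
      (hFl.integrable_sq.const_mul _).add (hH.integrable_sq.const_mul _)
    have hptL : ∀ ω,
        ((1 - 1 / (mm : ℝ)) * (n : ℝ) ^ 2) * (1 + G ((n : ℝ)⁻¹ • ϑstar (n : ℝ)) ω) ^ 2
            + (-(1 + (mm : ℝ))) * H ω ^ 2
          ≤ (H ω - (n : ℝ) - G (ϑstar (n : ℝ)) ω) ^ 2 := by
      intro ω
      simp only [hGsmul]
      obtain ⟨h1, -⟩ :=
        aux_sq_bounds (1 / (mm : ℝ)) mm (-((n : ℝ) + G (ϑstar (n : ℝ)) ω)) (H ω) hε hδ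
      have e1 : ((1 - 1 / (mm : ℝ)) * (n : ℝ) ^ 2)
            * (1 + (n : ℝ)⁻¹ * G (ϑstar (n : ℝ)) ω) ^ 2
          = (1 - 1 / (mm : ℝ)) * (-((n : ℝ) + G (ϑstar (n : ℝ)) ω)) ^ 2 := by
        field_simp
      have e2 : (-((n : ℝ) + G (ϑstar (n : ℝ)) ω) + H ω) ^ 2
          = (H ω - (n : ℝ) - G (ϑstar (n : ℝ)) ω) ^ 2 := by ring
      rw [e1, ← e2]
      linarith
    have hmonoL : μ[fun ω =>
          ((1 - 1 / (mm : ℝ)) * (n : ℝ) ^ 2) * (1 + G ((n : ℝ)⁻¹ • ϑstar (n : ℝ)) ω) ^ 2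
            + (-(1 + (mm : ℝ))) * H ω ^ 2|𝒢] ≤ᵐ[μ]
        μ[fun ω => (H ω - (n : ℝ) - G (ϑstar (n : ℝ)) ω) ^ 2|𝒢] :=
      condExp_mono hgl hfl (Eventually.of_forall hptL)
    have hcombL : μ[fun ω =>
          ((1 - 1 / (mm : ℝ)) * (n : ℝ) ^ 2) * (1 + G ((n : ℝ)⁻¹ • ϑstar (n : ℝ)) ω) ^ 2
            + (-(1 + (mm : ℝ))) * H ω ^ 2|𝒢] =ᵐ[μ]
        fun ω => ((1 - 1 / (mm : ℝ)) * (n : ℝ) ^ 2)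
            * (μ[fun ω => (1 + G ((n : ℝ)⁻¹ • ϑstar (n : ℝ)) ω) ^ 2|𝒢]) ω
          + (-(1 + (mm : ℝ))) * (μ[fun ω => H ω ^ 2|𝒢]) ω :=
      aux_condexp_comb 𝒢 _ _ _ _ hFl hH
    have hc : 0 ≤ (1 - 1 / (mm : ℝ)) * (n : ℝ) ^ 2 :=
      mul_nonneg (by linarith) (sq_nonneg _)
    filter_upwards [hquad (n : ℝ), hVle (n : ℝ) ((n : ℝ) • ϑpure), hopt (n : ℝ),
      hmonoU, hcombU, hVpureOpt, hmonoL, hcombL,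
      hVpureLe ((n : ℝ)⁻¹ • ϑstar (n : ℝ))] with ω
        eq_quad le_u eq_opt mU cU ePure mL cL lePure
    constructor
    · -- lower bound
      have h1 : ((1 - 1 / (mm : ℝ)) * (n : ℝ) ^ 2) * Vpure ω
          ≤ ((1 - 1 / (mm : ℝ)) * (n : ℝ) ^ 2)
            * (μ[fun ω => (1 + G ((n : ℝ)⁻¹ • ϑstar (n : ℝ)) ω) ^ 2|𝒢]) ω :=
        mul_le_mul_of_nonneg_left lePure hc
      rw [← eq_quad]
      rw [eq_opt]
      linarith [mL, cL, h1]
    · -- upper bound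
      rw [← eq_quad]
      rw [ePure]
      linarith [le_u, mU, cU]
  -- combine over all n, mm
  have hAll : ∀ᵐ ω ∂μ, ∀ n mm : ℕ, 1 ≤ n → 1 ≤ mm →
      ((1 - 1 / (mm : ℝ)) * (n : ℝ) ^ 2) * Vpure ω - (1 + (mm : ℝ)) * (μ[fun ω => H ω ^ 2|𝒢]) ω
          ≤ V0 ω - 2 * V1 ω * (n : ℝ) + V2 ω * (n : ℝ) ^ 2 ∧
        V0 ω - 2 * V1 ω * (n : ℝ) + V2 ω * (n : ℝ) ^ 2
          ≤ ((1 + 1 / (mm : ℝ)) * (n : ℝ) ^ 2) * Vpure ω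
              + (1 + (mm : ℝ)) * (μ[fun ω => H ω ^ 2|𝒢]) ω := by
    refine ae_all_iff.2 fun n => ae_all_iff.2 fun mm => ?_
    by_cases hn : 1 ≤ n
    · by_cases hm : 1 ≤ mm
      · filter_upwards [key n mm hn hm] with ω h _ _; exact h
      · filter_upwards with ω _ hm'; exact absurd hm' hm
    · filter_upwards with ω hn'; exact absurd hn' hn
  -- pointwise conclusion
  filter_upwards [hAll, hVp0] with ω hω hP
  set A := V0 ω with hA
  set B := V1 ω with hB
  set C2 := V2 ω with hC2
  set P := Vpure ω with hPdef
  set Kω := (μ[fun ω => H ω ^ 2|𝒢]) ω with hK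
  -- per-m bounds
  have stepU : ∀ mm : ℕ, 1 ≤ mm → C2 ≤ (1 + 1 / (mm : ℝ)) * P := by
    intro mm hm
    have hx : C2 - (1 + 1 / (mm : ℝ)) * P ≤ 0 := by
      refine aux_le_zero (C := (1 + (mm : ℝ)) * |Kω| + |A| + 2 * |B|) fun n hn => ?_
      have hn0 : (0 : ℝ) < n := by exact_mod_cast hn
      have hn1 : (1 : ℝ) ≤ n := by exact_mod_cast hn
      have hm0 : (0 : ℝ) ≤ mm := Nat.cast_nonneg mm
      have hup := (hω n mm hn hm).2
      rw [le_div_iff₀ hn0]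
      have q1 : 0 ≤ ((n : ℝ) - 1) * ((1 + (mm : ℝ)) * |Kω|) :=
        mul_nonneg (by linarith) (mul_nonneg (by linarith) (abs_nonneg _))
      have q2 : 0 ≤ ((n : ℝ) - 1) * |A| := mul_nonneg (by linarith) (abs_nonneg _)
      have q3 : 0 ≤ (n : ℝ) * (|B| - B) := mul_nonneg (by linarith) (by linarith [le_abs_self B])
      have q4 : 0 ≤ (1 + (mm : ℝ)) * (|Kω| - Kω) :=
        mul_nonneg (by linarith) (by linarith [le_abs_self Kω])
      have hstep : (C2 - (1 + 1 / (mm : ℝ)) * P) * n * n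
          ≤ ((1 + (mm : ℝ)) * |Kω| + |A| + 2 * |B|) * n := by
        nlinarith [hup, q1, q2, q3, q4, neg_abs_le A]
      exact le_of_mul_le_mul_right hstep hn0
    linarith
  have stepL : ∀ mm : ℕ, 1 ≤ mm → (1 - 1 / (mm : ℝ)) * P ≤ C2 := by
    intro mm hm
    have hx : (1 - 1 / (mm : ℝ)) * P - C2 ≤ 0 := by
      refine aux_le_zero (C := (1 + (mm : ℝ)) * |Kω| + |A| + 2 * |B|) fun n hn => ?_
      have hn0 : (0 : ℝ) < n := by exact_mod_cast hn
      have hn1 : (1 : ℝ) ≤ n := by exact_mod_cast hn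
      have hlo := (hω n mm hn hm).1
      rw [le_div_iff₀ hn0]
      have hm0 : (0 : ℝ) ≤ mm := Nat.cast_nonneg mm
      have q1 : 0 ≤ ((n : ℝ) - 1) * ((1 + (mm : ℝ)) * |Kω|) :=
        mul_nonneg (by linarith) (mul_nonneg (by linarith) (abs_nonneg _))
      have q2 : 0 ≤ ((n : ℝ) - 1) * |A| := mul_nonneg (by linarith) (abs_nonneg _)
      have q3 : 0 ≤ (n : ℝ) * (|B| + B) :=
        mul_nonneg (by linarith) (by linarith [neg_abs_le B])
      have q4 : 0 ≤ (1 + (mm : ℝ)) * (|Kω| - Kω) :=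
        mul_nonneg (by linarith) (by linarith [le_abs_self Kω])
      have hstep : ((1 - 1 / (mm : ℝ)) * P - C2) * n * n
          ≤ ((1 + (mm : ℝ)) * |Kω| + |A| + 2 * |B|) * n := by
        nlinarith [hlo, q1, q2, q3, q4, le_abs_self A]
      exact le_of_mul_le_mul_right hstep hn0
    linarith
  -- let m → ∞
  have h1 : C2 - P ≤ 0 := by
    refine aux_le_zero (C := P) fun mm hm => ?_
    have := stepU mm hm
    have e : (1 + 1 / (mm : ℝ)) * P = P + P / mm := by ring
    linarith
  have h2 : P - C2 ≤ 0 := by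
    refine aux_le_zero (C := P) fun mm hm => ?_
    have := stepL mm hm
    have e : (1 - 1 / (mm : ℝ)) * P = P - P / mm := by ring
    linarith
  show C2 = P
  linarith
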